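/- For n, d ∈ ℕ, let Λ_{n,d}^{HC} = { ν ∈ ℕ₀^d : ∏_{k=1}^d (ν_k + 1) ≤ n } be the hyperbolic cross index set of order n. Then its cardinality satisfies |Λ_{n,d}^{HC}| ≤ 2 n³ 4^d. -/

import Mathlib

open Finset

/-- The hyperbolic cross as a Finset. -/
def hcT (d n : ℕ) : Finset (Fin d → ℕ) :=
  (Fintype.piFinset fun _ => Finset.range n).filter fun ν => ∏ k, (ν k + 1) ≤ n

lemma hc_set_eq (d n : ℕ) :
    {ν : Fin d → ℕ | ∏ k, (ν k + 1) ≤ n} = ↑(hcT d n) := by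
  ext ν
  simp only [hcT, Set.mem_setOf_eq, coe_filter, Fintype.mem_piFinset, mem_range,
    Set.mem_setOf_eq]
  constructor
  · intro h
    refine ⟨fun k => ?_, h⟩
    have h1 : ν k + 1 ≤ ∏ i, (ν i + 1) :=
      Finset.single_le_prod' (fun i _ => Nat.succ_le_succ (Nat.zero_le _)) (mem_univ k)
    omega
  · exact fun h => h.2

lemma div_tel (m j : ℕ) (hj : 1 ≤ j) :
    m / (j * (j + 1)) + m / (j + 1) ≤ m / j := by
  rw [Nat.le_div_iff_mul_le hj, add_mul]
  have h1 : m / (j * (j + 1)) * j ≤ m / (j + 1) := by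
    rw [mul_comm j, ← Nat.div_div_eq_div_mul]
    exact Nat.div_mul_le_self _ _
  have h2 : m / (j + 1) * (j + 1) ≤ m := Nat.div_mul_le_self _ _
  have h3 : m / (j + 1) * j + m / (j + 1) = m / (j + 1) * (j + 1) := by ring
  omega

lemma sum_div_sq (m : ℕ) : ∀ n, 1 ≤ n →
    (∑ j ∈ Finset.range n, m / (j + 1) ^ 2) + m / n ≤ 2 * m := by
  intro n hn
  induction n, hn using Nat.le_induction with
  | base => simp; omega
  | succ n hn ih =>
    rw [Finset.sum_range_succ]
    have h1 : m / (n + 1) ^ 2 ≤ m / (n * (n + 1)) := by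
      apply Nat.div_le_div_left
      · nlinarith
      · positivity
    have h2 := div_tel m n hn
    omega

lemma hc_card : ∀ d n : ℕ, (hcT d n).card ≤ 2 * n ^ 3 * 4 ^ d := by
  intro d
  induction d with
  | zero =>
    intro n
    rcases Nat.eq_zero_or_pos n with h | h
    · subst h; simp [hcT]
    · calc (hcT 0 n).card ≤ 1 := by
            apply Finset.card_le_one.mpr; intro a _ b _
            ext k; exact absurd k.2 (by omega)
        _ ≤ 2 * n ^ 3 * 4 ^ 0 := by
            have : 1 ≤ n ^ 3 := Nat.one_le_pow _ _ h
            simpa using by nlinarith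
  | succ d ih =>
    intro n
    -- inject into a sigma type
    have key : (hcT (d + 1) n).card ≤
        ∑ j ∈ Finset.range n, (hcT d (n / (j + 1))).card := by
      rw [← Finset.card_sigma]
      apply Finset.card_le_card_of_injOn (fun ν => ⟨ν 0, Fin.tail ν⟩)
      · intro ν hν
        simp only [Finset.mem_coe, hcT, mem_filter, Fintype.mem_piFinset, mem_range] at hν
        obtain ⟨hmem, hprod⟩ := hν
        rw [Fin.prod_univ_succ] at hprod
        have htail : ∏ k : Fin d, (Fin.tail ν k + 1) ≤ n / (ν 0 + 1) := by
          rw [Nat.le_div_iff_mul_le (by omega)]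
          calc (∏ k : Fin d, (Fin.tail ν k + 1)) * (ν 0 + 1)
              = (ν 0 + 1) * ∏ k : Fin d, (Fin.tail ν k + 1) := by ring
            _ ≤ n := hprod
        simp only [Finset.mem_coe, Finset.mem_sigma, mem_range, hcT, mem_filter,
          Fintype.mem_piFinset, mem_range]
        refine ⟨hmem 0, fun k => ?_, htail⟩
        have h1 : Fin.tail ν k + 1 ≤ ∏ i : Fin d, (Fin.tail ν i + 1) :=
          Finset.single_le_prod' (fun i _ => Nat.succ_le_succ (Nat.zero_le _)) (mem_univ k)
        omega
      · intro a _ b _ hab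
        obtain ⟨h0, ht⟩ := Sigma.mk.inj_iff.mp hab
        have ht' : Fin.tail a = Fin.tail b := eq_of_heq ht
        funext k
        rcases Fin.eq_zero_or_eq_succ k with rfl | ⟨i, rfl⟩
        · exact h0
        · exact congrFun ht' i
    calc (hcT (d + 1) n).card
        ≤ ∑ j ∈ Finset.range n, (hcT d (n / (j + 1))).card := key
      _ ≤ ∑ j ∈ Finset.range n, 2 * (n / (j + 1)) ^ 3 * 4 ^ d :=
          Finset.sum_le_sum fun j _ => ih _
      _ ≤ ∑ j ∈ Finset.range n, 2 * (n ^ 3 / (j + 1) ^ 2) * 4 ^ d := by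
          apply Finset.sum_le_sum
          intro j _
          have h1 : (n / (j + 1)) ^ 3 ≤ n ^ 3 / (j + 1) ^ 3 := by
            rw [Nat.le_div_iff_mul_le (by positivity), ← mul_pow]
            exact Nat.pow_le_pow_left (Nat.div_mul_le_self _ _) 3
          have h2 : n ^ 3 / (j + 1) ^ 3 ≤ n ^ 3 / (j + 1) ^ 2 := by
            apply Nat.div_le_div_left
            · exact Nat.pow_le_pow_right (by omega) (by omega)
            · positivity
          exact Nat.mul_le_mul_right _ (Nat.mul_le_mul_left _ (le_trans h1 h2))
      _ ≤ 2 * n ^ 3 * 4 ^ (d + 1) := by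
          rcases Nat.eq_zero_or_pos n with h | h
          · simp [h]
          have hsum : ∑ j ∈ Finset.range n, n ^ 3 / (j + 1) ^ 2 ≤ 2 * n ^ 3 := by
            exact le_trans (Nat.le_add_right _ _) (sum_div_sq (n ^ 3) n h)
          calc ∑ j ∈ Finset.range n, 2 * (n ^ 3 / (j + 1) ^ 2) * 4 ^ d
              = 2 * 4 ^ d * ∑ j ∈ Finset.range n, n ^ 3 / (j + 1) ^ 2 := by
                rw [Finset.mul_sum]; apply Finset.sum_congr rfl; intros; ring
            _ ≤ 2 * 4 ^ d * (2 * n ^ 3) := by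
                exact Nat.mul_le_mul_left _ hsum
            _ = 4 * n ^ 3 * 4 ^ d := by ring
            _ ≤ 8 * n ^ 3 * 4 ^ d := Nat.mul_le_mul_right _ (by nlinarith [Nat.zero_le (n ^ 3)])
            _ = 2 * n ^ 3 * 4 ^ (d + 1) := by ring

/-- Cardinality bound for the hyperbolic cross index set:
`|Λ^HC_{n,d}| ≤ 2 n³ 4^d`. -/
theorem hyperbolic_cross_card_le (d n : ℕ) (hd : 1 ≤ d) (hn : 1 ≤ n) :
    {ν : Fin d → ℕ | ∏ k, (ν k + 1) ≤ n}.Finite ∧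
      {ν : Fin d → ℕ | ∏ k, (ν k + 1) ≤ n}.ncard ≤ 2 * n ^ 3 * 4 ^ d := by
  rw [hc_set_eq]
  exact ⟨(hcT d n).finite_toSet, by rw [Set.ncard_coe_finset]; exact hc_card d n⟩
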